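/- Assume α > C. For N ≥ 2 let π^N be the unique invariant probability measure of the N-particle Fleming–Viot process and ρ^N(x) := ∑_ξ π^N(ξ)·η(ξ,x)/N. Then the family of measures (ρ^N, N ≥ 2) is tight: for every ε > 0 there exists a finite set F ⊂ Λ such that ∑_{x∉F} ρ^N(x) < ε for all N ≥ 2. -/

import Mathlib

set_option linter.unusedSectionVars false
open scoped BigOperators Topology

/-- The number of Fleming–Viot particles at site `y` in the configuration `ξ`,
`η(ξ,y) = #{i : ξ(i) = y}`, as a real number. -/
noncomputable def etaCount {Λ : Type*} [DecidableEq Λ] {N : ℕ} (ξ : Fin N → Λ) (y : Λ) : ℝ :=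
  ((Finset.univ.filter fun i => ξ i = y).card : ℝ)

/-- The exponential of a bounded operator on a Banach space; used to define the transition
semigroup `S_t = exp (t • L)` of the Fleming–Viot process. -/
noncomputable def opExp {E : Type*} [NormedAddCommGroup E] [NormedSpace ℝ E] [CompleteSpace E]
    (L : E →L[ℝ] E) : E →L[ℝ] E :=
  letI : IsTopologicalRing (E →L[ℝ] E) := inferInstance
  NormedSpace.exp L

open Function Set

section TsumHelpers
variable {β : Type*} [DecidableEq β]

lemma myTsumIte (f : β → ℝ) (hf : Summable f) (a : β) :
    ∑' y, f y = f a + ∑' y, if y = a then 0 else f y :=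
  Summable.tsum_eq_add_tsum_ite hf a

lemma mySummableIte (f : β → ℝ) (hf : Summable f) (a : β) :
    Summable (fun y => if y = a then 0 else f y) := by
  have : (fun y => if y = a then 0 else f y) = fun y => f y - (if y = a then f y else 0) := by
    funext y; by_cases h : y = a <;> simp [h]
  rw [this]
  exact hf.sub (summable_of_ne_finset_zero (s := {a}) (by intro b hb; simp at hb; simp [hb]))

lemma myTsumNeSubtype (f : β → ℝ) (a : β) :
    ∑' y : {y : β // y ≠ a}, f ↑y = ∑' y, if y = a then 0 else f y := by
  have h : ∑' y : ({a}ᶜ : Set β), f ↑y = ∑' y, ({a}ᶜ : Set β).indicator f y :=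
    tsum_subtype _ f
  refine Eq.trans (Eq.trans rfl h) (tsum_congr fun y => ?_)
  by_cases hy : y = a <;> simp [Set.indicator_apply, hy]

lemma mySummableNeSubtype (f : β → ℝ) (a : β)
    (h : Summable (fun y => if y = a then 0 else f y)) :
    Summable (fun y : {y : β // y ≠ a} => f ↑y) := by
  have h2 : Summable (({a}ᶜ : Set β).indicator f) := by
    refine h.congr fun y => ?_
    by_cases hy : y = a <;> simp [Set.indicator_apply, hy]
  exact summable_subtype_iff_indicator.mpr h2

lemma mySummableIteOfSubtype (f : β → ℝ) (a : β)
    (h : Summable (fun y : {y : β // y ≠ a} => f ↑y)) :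
    Summable (fun y => if y = a then 0 else f y) := by
  have h2 : Summable (({a}ᶜ : Set β).indicator f) :=
    summable_subtype_iff_indicator.mp h
  exact h2.congr fun y => by by_cases hy : y = a <;> simp [Set.indicator_apply, hy]

lemma myTsumOption (f : Option β → ℝ) (hf : Summable f) :
    ∑' o : Option β, f o = f none + ∑' b : β, f (some b) := by
  classical
  have h1 : Function.support (fun o : Option β => if o = none then 0 else f o)
      ⊆ Set.range (some : β → Option β) := by
    intro o ho
    rcases o with _ | b
    · simp at ho
    · exact ⟨b, rfl⟩
  have h2 := (Option.some_injective β).tsum_eq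
    (f := fun o : Option β => if o = none then 0 else f o) h1
  have h3 : ∑' b : β, f (some b) = ∑' o : Option β, if o = none then 0 else f o := by
    rw [← h2]; exact tsum_congr fun b => by simp
  rw [h3]
  exact Summable.tsum_eq_add_tsum_ite hf none

def optEquiv (x : β) : Option {y : β // y ≠ x} ≃ {z : Option β // z ≠ some x} where
  toFun o := match o with
    | none => ⟨none, by simp⟩
    | some y => ⟨some y.1, by simp [y.2]⟩
  invFun z := match z with
    | ⟨none, _⟩ => none
    | ⟨some y, h⟩ => some ⟨y, by simpa using h⟩
  left_inv o := by cases o <;> rfl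
  right_inv z := by rcases z with ⟨z, h⟩; cases z <;> rfl

lemma myOptionSubtypeTsum (x : β) (F : Option β → ℝ)
    (h : Summable fun z : {z : Option β // z ≠ some x} => F ↑z) :
    (∑' z : {z : Option β // z ≠ some x}, F ↑z)
      = F none + ∑' y : {y : β // y ≠ x}, F (some ↑y) := by
  have he := (optEquiv x).tsum_eq (fun z : {z : Option β // z ≠ some x} => F ↑z)
  have hs : Summable (fun o : Option {y : β // y ≠ x} => F ↑(optEquiv x o)) :=
    ((optEquiv x).summable_iff).mpr h
  rw [← he, myTsumOption _ hs]
  rfl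

end TsumHelpers

section Eta
variable {Λ : Type*} [DecidableEq Λ] {N : ℕ}

lemma etaCount_nonneg (ξ : Fin N → Λ) (y : Λ) : 0 ≤ etaCount ξ y := Nat.cast_nonneg _

lemma etaCount_eq_zero (ξ : Fin N → Λ) {y : Λ} (hy : y ∉ Finset.image ξ Finset.univ) :
    etaCount ξ y = 0 := by
  unfold etaCount
  norm_cast
  rw [Finset.card_eq_zero, Finset.filter_eq_empty_iff]
  intro i _ h
  exact hy (h ▸ Finset.mem_image_of_mem ξ (Finset.mem_univ i))

lemma sum_comp_eq (ξ : Fin N → Λ) (h : Λ → ℝ) :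
    ∑ y ∈ Finset.image ξ Finset.univ, etaCount ξ y * h y = ∑ i, h (ξ i) := by
  rw [← Finset.sum_fiberwise_of_maps_to
    (fun i (_ : i ∈ Finset.univ) => Finset.mem_image_of_mem ξ (Finset.mem_univ i))
    (fun i => h (ξ i))]
  refine Finset.sum_congr rfl fun y hy => ?_
  have hcongr : ∀ i ∈ Finset.univ.filter (fun i => ξ i = y), h (ξ i) = h y := fun i hi => by
    rw [(Finset.mem_filter.mp hi).2]
  rw [Finset.sum_congr rfl hcongr, Finset.sum_const, nsmul_eq_mul, etaCount]

lemma summable_eta_mul (ξ : Fin N → Λ) (h : Λ → ℝ) :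
    Summable (fun y => etaCount ξ y * h y) :=
  summable_of_ne_finset_zero (s := Finset.image ξ Finset.univ)
    (fun y hy => by rw [etaCount_eq_zero ξ hy, zero_mul])

lemma tsum_eta_mul (ξ : Fin N → Λ) (h : Λ → ℝ) :
    ∑' y, etaCount ξ y * h y = ∑ i, h (ξ i) := by
  rw [tsum_eq_sum (s := Finset.image ξ Finset.univ)
    (fun y hy => by rw [etaCount_eq_zero ξ hy, zero_mul])]
  exact sum_comp_eq ξ h

end Eta

section QRow
variable {Λ : Type*} [DecidableEq Λ]
variable (q : Option Λ → Option Λ → ℝ)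

/-- The off-diagonal part of the row `x` of the rate matrix, within `Λ`. -/
def qrow (x : Λ) : Λ → ℝ := fun y => if y = x then 0 else q (some x) (some y)

variable {q}

lemma qrow_nonneg (hq_nonneg : ∀ x y, x ≠ y → 0 ≤ q x y) (x y : Λ) :
    0 ≤ qrow q x y := by
  unfold qrow
  by_cases hy : y = x
  · simp [hy]
  · simpa [hy] using hq_nonneg (some x) (some y)
      (by simp only [ne_eq, Option.some.injEq]; exact fun h => hy h.symm)

lemma summable_subrow
    (hq_summable : ∀ x, Summable (fun y : {y : Option Λ // y ≠ x} => q x (y : Option Λ)))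
    (x : Λ) :
    Summable (fun y : {y : Λ // y ≠ x} => q (some x) (some ↑y)) := by
  have hj : Function.Injective (fun y : {y : Λ // y ≠ x} =>
      (⟨some ↑y, by simp [y.2]⟩ : {z : Option Λ // z ≠ some x})) := by
    intro a b hab
    have h2 := congrArg (fun z => z.1) hab
    simp only [Option.some.injEq] at h2
    exact Subtype.ext h2
  exact (hq_summable (some x)).comp_injective hj

lemma summable_qrow
    (hq_summable : ∀ x, Summable (fun y : {y : Option Λ // y ≠ x} => q x (y : Option Λ)))
    (x : Λ) : Summable (qrow q x) :=
  mySummableIteOfSubtype _ x (summable_subrow hq_summable x)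

lemma tsum_optionrow_split
    (hq_summable : ∀ x, Summable (fun y : {y : Option Λ // y ≠ x} => q x (y : Option Λ)))
    (x : Λ) :
    (∑' z : {z : Option Λ // z ≠ some x}, q (some x) (z : Option Λ))
      = q (some x) none + ∑' y, qrow q x y := by
  rw [myOptionSubtypeTsum x (q (some x)) (hq_summable (some x))]
  congr 1
  rw [myTsumNeSubtype (fun y : Λ => q (some x) (some y)) x]
  rfl

lemma qdiag_eq
    (hq_summable : ∀ x, Summable (fun y : {y : Option Λ // y ≠ x} => q x (y : Option Λ)))
    (hq_diag : ∀ x, q x x = -∑' y : {y : Option Λ // y ≠ x}, q x (y : Option Λ))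
    (x : Λ) :
    q (some x) (some x) = -(q (some x) none + ∑' y, qrow q x y) := by
  rw [hq_diag (some x), tsum_optionrow_split hq_summable x]

lemma q_none_nonneg (hq_nonneg : ∀ x y, x ≠ y → 0 ≤ q x y) (x : Λ) :
    0 ≤ q (some x) none := hq_nonneg (some x) none (by simp)

lemma tsum_qrow_nonneg (hq_nonneg : ∀ x y, x ≠ y → 0 ≤ q x y) (x : Λ) :
    0 ≤ ∑' y, qrow q x y := tsum_nonneg (qrow_nonneg hq_nonneg x)

lemma tsum_qrow_le_qbar (hq_nonneg : ∀ x y, x ≠ y → 0 ≤ q x y)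
    (hq_summable : ∀ x, Summable (fun y : {y : Option Λ // y ≠ x} => q x (y : Option Λ)))
    {qbar : ℝ}
    (hqbar : ∀ x, (∑' y : {y : Option Λ // y ≠ x}, q x (y : Option Λ)) ≤ qbar)
    (x : Λ) : ∑' y, qrow q x y ≤ qbar := by
  have h := tsum_optionrow_split hq_summable x
  have h2 := hqbar (some x)
  rw [h] at h2
  linarith [q_none_nonneg hq_nonneg x]

lemma q_none_le_qbar (hq_nonneg : ∀ x y, x ≠ y → 0 ≤ q x y)
    (hq_summable : ∀ x, Summable (fun y : {y : Option Λ // y ≠ x} => q x (y : Option Λ)))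
    {qbar : ℝ}
    (hqbar : ∀ x, (∑' y : {y : Option Λ // y ≠ x}, q x (y : Option Λ)) ≤ qbar)
    (x : Λ) : q (some x) none ≤ qbar := by
  have h := tsum_optionrow_split hq_summable x
  have h2 := hqbar (some x)
  rw [h] at h2
  linarith [tsum_qrow_nonneg hq_nonneg x]

lemma fullrow_decomp (x : Λ) :
    (fun y : Λ => q (some x) (some y))
      = fun y => qrow q x y + (if y = x then q (some x) (some x) else 0) := by
  funext y
  by_cases hy : y = x <;> simp [qrow, hy]

lemma summable_fullrow
    (hq_summable : ∀ x, Summable (fun y : {y : Option Λ // y ≠ x} => q x (y : Option Λ)))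
    (x : Λ) : Summable (fun y : Λ => q (some x) (some y)) := by
  rw [fullrow_decomp]
  exact (summable_qrow hq_summable x).add
    (summable_of_ne_finset_zero (s := {x}) (by intro b hb; simp at hb; simp [hb]))

lemma tsum_fullrow
    (hq_summable : ∀ x, Summable (fun y : {y : Option Λ // y ≠ x} => q x (y : Option Λ)))
    (hq_diag : ∀ x, q x x = -∑' y : {y : Option Λ // y ≠ x}, q x (y : Option Λ))
    (x : Λ) :
    ∑' y : Λ, q (some x) (some y) = -(q (some x) none) := by
  rw [fullrow_decomp,
    Summable.tsum_add (summable_qrow hq_summable x)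
      (summable_of_ne_finset_zero (s := {x}) (by intro b hb; simp at hb; simp [hb])),
    tsum_ite_eq x (fun _ => q (some x) (some x)), qdiag_eq hq_summable hq_diag x]
  ring

end QRow

section CCoef
variable {Λ : Type*} [DecidableEq Λ]
variable (q : Option Λ → Option Λ → ℝ)

/-- `c(z) = inf_{x ≠ z} q(x,z)`. -/
noncomputable def cmin (z : Λ) : ℝ := ⨅ x : {x : Λ // x ≠ z}, q (some (x : Λ)) (some z)

variable {q}

lemma cmin_nonneg (hq_nonneg : ∀ x y, x ≠ y → 0 ≤ q x y) (z : Λ) : 0 ≤ cmin q z := by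
  unfold cmin
  by_cases h : Nonempty {x : Λ // x ≠ z}
  · exact Real.iInf_nonneg fun x => hq_nonneg _ _
      (by simp only [ne_eq, Option.some.injEq]; exact x.2)
  · rw [not_nonempty_iff] at h
    rw [iInf, Set.range_eq_empty, Real.sInf_empty]

lemma cmin_le (hq_nonneg : ∀ x y, x ≠ y → 0 ≤ q x y) {x z : Λ} (h : x ≠ z) :
    cmin q z ≤ q (some x) (some z) := by
  refine ciInf_le ⟨0, ?_⟩ (⟨x, h⟩ : {x : Λ // x ≠ z})
  rintro r ⟨i, rfl⟩
  exact hq_nonneg _ _ (by simp only [ne_eq, Option.some.injEq]; exact i.2)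

lemma summable_cmin [Nonempty Λ] (hq_nonneg : ∀ x y, x ≠ y → 0 ≤ q x y)
    (hq_summable : ∀ x, Summable (fun y : {y : Option Λ // y ≠ x} => q x (y : Option Λ))) :
    Summable (cmin q) := by
  obtain ⟨x₀⟩ := (inferInstance : Nonempty Λ)
  refine Summable.of_nonneg_of_le (cmin_nonneg hq_nonneg)
    (f := fun z => qrow q x₀ z + (if z = x₀ then cmin q x₀ else 0)) (fun z => ?_) ?_
  · by_cases hz : z = x₀
    · subst hz; simp [qrow]
    · have : cmin q z ≤ qrow q x₀ z := by
        have := cmin_le (q := q) hq_nonneg (fun h : x₀ = z => hz h.symm)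
        simpa [qrow, hz] using this
      simpa [hz] using this
  · exact (summable_qrow hq_summable x₀).add
      (summable_of_ne_finset_zero (s := {x₀}) (by intro b hb; simp at hb; simp [hb]))

end CCoef

section PerXi
variable {Λ : Type*} [DecidableEq Λ]
variable {q : Option Λ → Option Λ → ℝ}

lemma rowg_decomp (x : Λ) (g : Λ → ℝ) :
    (fun y : Λ => q (some x) (some y) * g y)
      = fun y => qrow q x y * g y
          + (if y = x then q (some x) (some x) * g x else 0) := by
  funext y
  by_cases hy : y = x <;> simp [qrow, hy]

lemma summable_qrow_mul_g
    (hq_nonneg : ∀ x y, x ≠ y → 0 ≤ q x y)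
    (hq_summable : ∀ x, Summable (fun y : {y : Option Λ // y ≠ x} => q x (y : Option Λ)))
    (x : Λ) {g : Λ → ℝ} (hg0 : ∀ y, 0 ≤ g y) (hg1 : ∀ y, g y ≤ 1) :
    Summable (fun y : Λ => qrow q x y * g y) :=
  Summable.of_nonneg_of_le
    (fun y => mul_nonneg (qrow_nonneg hq_nonneg x y) (hg0 y))
    (fun y => mul_le_of_le_one_right (qrow_nonneg hq_nonneg x y) (hg1 y))
    (summable_qrow hq_summable x)

lemma summable_rowg
    (hq_nonneg : ∀ x y, x ≠ y → 0 ≤ q x y)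
    (hq_summable : ∀ x, Summable (fun y : {y : Option Λ // y ≠ x} => q x (y : Option Λ)))
    (x : Λ) {g : Λ → ℝ} (hg0 : ∀ y, 0 ≤ g y) (hg1 : ∀ y, g y ≤ 1) :
    Summable (fun y : Λ => q (some x) (some y) * g y) := by
  rw [rowg_decomp]
  exact (summable_qrow_mul_g hq_nonneg hq_summable x hg0 hg1).add
    (summable_of_ne_finset_zero (s := {x}) (by intro b hb; simp at hb; simp [hb]))

lemma tsum_rowg_eq
    (hq_nonneg : ∀ x y, x ≠ y → 0 ≤ q x y)
    (hq_summable : ∀ x, Summable (fun y : {y : Option Λ // y ≠ x} => q x (y : Option Λ)))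
    (x : Λ) {g : Λ → ℝ} (hg0 : ∀ y, 0 ≤ g y) (hg1 : ∀ y, g y ≤ 1) :
    ∑' y : Λ, q (some x) (some y) * g y
      = q (some x) (some x) * g x + ∑' y, qrow q x y * g y := by
  rw [rowg_decomp, Summable.tsum_add (summable_qrow_mul_g hq_nonneg hq_summable x hg0 hg1)
      (summable_of_ne_finset_zero (s := {x}) (by intro b hb; simp at hb; simp [hb])),
    tsum_ite_eq x (fun _ => q (some x) (some x) * g x)]
  ring

lemma per_xi_identity
    (hq_nonneg : ∀ x y, x ≠ y → 0 ≤ q x y)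
    (hq_summable : ∀ x, Summable (fun y : {y : Option Λ // y ≠ x} => q x (y : Option Λ)))
    (hq_diag : ∀ x, q x x = -∑' y : {y : Option Λ // y ≠ x}, q x (y : Option Λ))
    {N : ℕ} (hN : 2 ≤ N) {g : Λ → ℝ} (hg0 : ∀ y, 0 ≤ g y) (hg1 : ∀ y, g y ≤ 1)
    (ξ : Fin N → Λ) (i : Fin N) :
    (∑' y : {y : Λ // y ≠ ξ i},
      (q (some (ξ i)) (some (y : Λ))
          + q (some (ξ i)) none * etaCount ξ (y : Λ) / ((N : ℝ) - 1))
        * (g ↑y - g (ξ i)))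
    = (∑' y : Λ, q (some (ξ i)) (some y) * g y)
      + q (some (ξ i)) none * ((∑ j, g (ξ j)) - g (ξ i)) / ((N : ℝ) - 1) := by
  have hN1 : (0:ℝ) < (N:ℝ) - 1 := by
    have : (2:ℝ) ≤ (N:ℝ) := by exact_mod_cast hN
    linarith
  set x := ξ i with hx
  set q0 := q (some x) none with hq0
  -- move to a tsum over Λ
  rw [myTsumNeSubtype
    (fun y : Λ => (q (some x) (some y) + q0 * etaCount ξ y / ((N : ℝ) - 1)) * (g y - g x)) x]
  -- rewrite the integrand
  have hinteg : (fun y : Λ => if y = x then 0 else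
      (q (some x) (some y) + q0 * etaCount ξ y / ((N : ℝ) - 1)) * (g y - g x))
      = fun y => qrow q x y * (g y - g x)
          + (q0 / ((N : ℝ) - 1)) * (etaCount ξ y * (g y - g x)) := by
    funext y
    by_cases hy : y = x
    · simp [hy, qrow]
    · simp only [hy, if_false, qrow]
      ring
  rw [hinteg]
  -- summability of the pieces
  have hs1 : Summable (fun y : Λ => qrow q x y * (g y - g x)) := by
    have : (fun y : Λ => qrow q x y * (g y - g x))
        = fun y => qrow q x y * g y - qrow q x y * g x := by funext y; ring
    rw [this]
    exact (summable_qrow_mul_g hq_nonneg hq_summable x hg0 hg1).sub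
      ((summable_qrow hq_summable x).mul_right (g x))
  have hs2 : Summable (fun y : Λ => (q0 / ((N : ℝ) - 1)) * (etaCount ξ y * (g y - g x))) :=
    (summable_eta_mul ξ (fun y => g y - g x)).mul_left _
  rw [Summable.tsum_add hs1 hs2]
  -- first piece
  have hfirst : ∑' y, qrow q x y * (g y - g x)
      = (∑' y, qrow q x y * g y) - (∑' y, qrow q x y) * g x := by
    have : (fun y : Λ => qrow q x y * (g y - g x))
        = fun y => qrow q x y * g y - qrow q x y * g x := by funext y; ring
    rw [this, Summable.tsum_sub (summable_qrow_mul_g hq_nonneg hq_summable x hg0 hg1)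
      ((summable_qrow hq_summable x).mul_right (g x)), tsum_mul_right]
  -- second piece
  have hsecond : ∑' y, (q0 / ((N : ℝ) - 1)) * (etaCount ξ y * (g y - g x))
      = (q0 / ((N : ℝ) - 1)) * ((∑ j, g (ξ j)) - (N : ℝ) * g x) := by
    rw [tsum_mul_left]
    congr 1
    have : (fun y : Λ => etaCount ξ y * (g y - g x))
        = fun y => etaCount ξ y * g y - etaCount ξ y * g x := by funext y; ring
    rw [this, Summable.tsum_sub (summable_eta_mul ξ g) (summable_eta_mul ξ (fun _ => g x)),
      tsum_eta_mul ξ g, tsum_eta_mul ξ (fun _ => g x), Finset.sum_const]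
    simp [mul_comm]
  rw [hfirst, hsecond, tsum_rowg_eq hq_nonneg hq_summable x hg0 hg1,
    qdiag_eq hq_summable hq_diag x]
  field_simp
  ring

end PerXi

section Stationarity
variable {Λ : Type*} [DecidableEq Λ] [TopologicalSpace Λ] [DiscreteTopology Λ]
variable {q : Option Λ → Option Λ → ℝ}

/-- The bounded continuous function `ξ ↦ ∑ i, g (ξ i)`. -/
noncomputable def gBCF (N : ℕ) (g : Λ → ℝ) (hg0 : ∀ y, 0 ≤ g y) (hg1 : ∀ y, g y ≤ 1) :
    BoundedContinuousFunction (Fin N → Λ) ℝ :=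
  BoundedContinuousFunction.mkOfBound
    ⟨fun ξ => ∑ i, g (ξ i), continuous_of_discreteTopology⟩ (2 * N)
    (by
      have hb : ∀ ξ : Fin N → Λ, |∑ i, g (ξ i)| ≤ N := fun ξ => by
        calc |∑ i, g (ξ i)| ≤ ∑ i, |g (ξ i)| := Finset.abs_sum_le_sum_abs _ _
          _ ≤ ∑ _i : Fin N, 1 := Finset.sum_le_sum
              (fun i _ => abs_le.mpr ⟨by linarith [hg0 (ξ i)], hg1 (ξ i)⟩)
          _ = N := by simp
      intro ξ ζ
      rw [Real.dist_eq]
      calc |(∑ i, g (ξ i)) - ∑ i, g (ζ i)| ≤ |∑ i, g (ξ i)| + |∑ i, g (ζ i)| := abs_sub _ _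
        _ ≤ (N : ℝ) + N := add_le_add (hb ξ) (hb ζ)
        _ = 2 * N := by ring)

lemma gBCF_apply (N : ℕ) (g : Λ → ℝ) (hg0 : ∀ y, 0 ≤ g y) (hg1 : ∀ y, g y ≤ 1)
    (ξ : Fin N → Λ) : gBCF N g hg0 hg1 ξ = ∑ i, g (ξ i) := rfl

lemma update_sum_diff {N : ℕ} (g : Λ → ℝ) (ξ : Fin N → Λ) (i : Fin N) (y : Λ) :
    (∑ j, g (Function.update ξ i y j)) - (∑ j, g (ξ j)) = g y - g (ξ i) := by
  have h : ∀ j, g (Function.update ξ i y j) - g (ξ j)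
      = if j = i then g y - g (ξ i) else 0 := fun j => by
    by_cases hj : j = i
    · subst hj; simp
    · simp [Function.update_of_ne hj, hj]
  calc (∑ j, g (Function.update ξ i y j)) - (∑ j, g (ξ j))
      = ∑ j, (g (Function.update ξ i y j) - g (ξ j)) := (Finset.sum_sub_distrib _ _).symm
    _ = ∑ j, if j = i then g y - g (ξ i) else 0 := Finset.sum_congr rfl (fun j _ => h j)
    _ = g y - g (ξ i) := by simp

lemma Lf_eq
    (hq_nonneg : ∀ x y, x ≠ y → 0 ≤ q x y)
    (hq_summable : ∀ x, Summable (fun y : {y : Option Λ // y ≠ x} => q x (y : Option Λ)))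
    (hq_diag : ∀ x, q x x = -∑' y : {y : Option Λ // y ≠ x}, q x (y : Option Λ))
    (L : (N : ℕ) →
      BoundedContinuousFunction (Fin N → Λ) ℝ →L[ℝ] BoundedContinuousFunction (Fin N → Λ) ℝ)
    (hL : ∀ (N : ℕ), 2 ≤ N →
      ∀ (f : BoundedContinuousFunction (Fin N → Λ) ℝ) (ξ : Fin N → Λ),
      L N f ξ = ∑ i : Fin N, ∑' y : {y : Λ // y ≠ ξ i},
        (q (some (ξ i)) (some (y : Λ))
            + q (some (ξ i)) none * etaCount ξ (y : Λ) / ((N : ℝ) - 1))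
          * (f (Function.update ξ i (y : Λ)) - f ξ))
    {N : ℕ} (hN : 2 ≤ N) (g : Λ → ℝ) (hg0 : ∀ y, 0 ≤ g y) (hg1 : ∀ y, g y ≤ 1)
    (ξ : Fin N → Λ) :
    L N (gBCF N g hg0 hg1) ξ
      = (∑ i, ∑' y : Λ, q (some (ξ i)) (some y) * g y)
        + (∑ i, q (some (ξ i)) none * ((∑ j, g (ξ j)) - g (ξ i))) / ((N : ℝ) - 1) := by
  rw [hL N hN _ ξ, Finset.sum_div, ← Finset.sum_add_distrib]
  refine Finset.sum_congr rfl fun i _ => ?_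
  have hcong : (∑' y : {y : Λ // y ≠ ξ i},
      (q (some (ξ i)) (some (y : Λ))
          + q (some (ξ i)) none * etaCount ξ (y : Λ) / ((N : ℝ) - 1))
        * ((gBCF N g hg0 hg1) (Function.update ξ i (y : Λ)) - (gBCF N g hg0 hg1) ξ))
      = ∑' y : {y : Λ // y ≠ ξ i},
      (q (some (ξ i)) (some (y : Λ))
          + q (some (ξ i)) none * etaCount ξ (y : Λ) / ((N : ℝ) - 1))
        * (g ↑y - g (ξ i)) := by
    refine tsum_congr fun y => ?_
    rw [gBCF_apply, gBCF_apply, update_sum_diff g ξ i ↑y]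
  rw [hcong, per_xi_identity hq_nonneg hq_summable hq_diag hN hg0 hg1 ξ i]

lemma stationarity_bound
    (hq_nonneg : ∀ x y, x ≠ y → 0 ≤ q x y)
    (hq_summable : ∀ x, Summable (fun y : {y : Option Λ // y ≠ x} => q x (y : Option Λ)))
    (hq_diag : ∀ x, q x x = -∑' y : {y : Option Λ // y ≠ x}, q x (y : Option Λ))
    {qbar : ℝ}
    (hqbar : ∀ x, (∑' y : {y : Option Λ // y ≠ x}, q x (y : Option Λ)) ≤ qbar)
    {C : ℝ} (hC0 : 0 ≤ C) (hq0C : ∀ x : Λ, q (some x) none ≤ C)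
    (L : (N : ℕ) →
      BoundedContinuousFunction (Fin N → Λ) ℝ →L[ℝ] BoundedContinuousFunction (Fin N → Λ) ℝ)
    (hL : ∀ (N : ℕ), 2 ≤ N →
      ∀ (f : BoundedContinuousFunction (Fin N → Λ) ℝ) (ξ : Fin N → Λ),
      L N f ξ = ∑ i : Fin N, ∑' y : {y : Λ // y ≠ ξ i},
        (q (some (ξ i)) (some (y : Λ))
            + q (some (ξ i)) none * etaCount ξ (y : Λ) / ((N : ℝ) - 1))
          * (f (Function.update ξ i (y : Λ)) - f ξ))
    (π : (N : ℕ) → (Fin N → Λ) → ℝ)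
    (hπ_nonneg : ∀ N, 2 ≤ N → ∀ ξ, 0 ≤ π N ξ)
    (hπ_sum : ∀ N, 2 ≤ N → HasSum (π N) 1)
    (hπ_inv : ∀ N, 2 ≤ N → ∀ f : BoundedContinuousFunction (Fin N → Λ) ℝ,
      ∑' ξ : Fin N → Λ, π N ξ * L N f ξ = 0)
    {N : ℕ} (hN : 2 ≤ N) (g : Λ → ℝ) (hg0 : ∀ y, 0 ≤ g y) (hg1 : ∀ y, g y ≤ 1) :
    -(C * ∑' ξ : Fin N → Λ, π N ξ * ∑ i, g (ξ i))
      ≤ ∑' ξ : Fin N → Λ, π N ξ * ∑ i, ∑' y : Λ, q (some (ξ i)) (some y) * g y := by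
  classical
  have hN1 : (0:ℝ) < (N:ℝ) - 1 := by
    have : (2:ℝ) ≤ (N:ℝ) := by exact_mod_cast hN
    linarith
  set S : (Fin N → Λ) → ℝ := fun ξ => ∑ i, g (ξ i) with hS
  set A : (Fin N → Λ) → ℝ := fun ξ => ∑ i, ∑' y : Λ, q (some (ξ i)) (some y) * g y with hA
  set PP : (Fin N → Λ) → ℝ :=
    fun ξ => (∑ i, q (some (ξ i)) none * (S ξ - g (ξ i))) / ((N : ℝ) - 1) with hPP
  have hq0 : ∀ x : Λ, 0 ≤ q (some x) none := q_none_nonneg hq_nonneg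
  -- pointwise bounds
  have hS0 : ∀ ξ, 0 ≤ S ξ := fun ξ => Finset.sum_nonneg (fun i _ => hg0 (ξ i))
  have hSN : ∀ ξ, S ξ ≤ N := fun ξ => by
    calc S ξ ≤ ∑ _i : Fin N, 1 := Finset.sum_le_sum (fun i _ => hg1 (ξ i))
      _ = N := by simp
  have hSg : ∀ ξ (i : Fin N), g (ξ i) ≤ S ξ := fun ξ i =>
    Finset.single_le_sum (fun j _ => hg0 (ξ j)) (Finset.mem_univ i)
  have hPP0 : ∀ ξ, 0 ≤ PP ξ := fun ξ => by
    refine div_nonneg (Finset.sum_nonneg fun i _ => mul_nonneg (hq0 _) ?_) hN1.le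
    exact sub_nonneg.mpr (hSg ξ i)
  have hPPC : ∀ ξ, PP ξ ≤ C * S ξ := fun ξ => by
    rw [hPP, div_le_iff₀ hN1]
    calc (∑ i, q (some (ξ i)) none * (S ξ - g (ξ i)))
        ≤ ∑ i, C * (S ξ - g (ξ i)) := Finset.sum_le_sum (fun i _ =>
          mul_le_mul_of_nonneg_right (hq0C (ξ i)) (sub_nonneg.mpr (hSg ξ i)))
      _ = C * (((N : ℝ)) * S ξ - S ξ) := by
          rw [← Finset.mul_sum, Finset.sum_sub_distrib, Finset.sum_const]
          simp [nsmul_eq_mul]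
          exact Or.inl rfl
      _ = C * S ξ * ((N : ℝ) - 1) := by ring
  -- bound on A
  have habs : ∀ x : Λ, |∑' y : Λ, q (some x) (some y) * g y| ≤ 2 * qbar := fun x => by
    rw [tsum_rowg_eq hq_nonneg hq_summable x hg0 hg1]
    have h1 : 0 ≤ ∑' y, qrow q x y * g y :=
      tsum_nonneg fun y => mul_nonneg (qrow_nonneg hq_nonneg x y) (hg0 y)
    have h2 : (∑' y, qrow q x y * g y) ≤ ∑' y, qrow q x y :=
      Summable.tsum_le_tsum (fun y => mul_le_of_le_one_right (qrow_nonneg hq_nonneg x y) (hg1 y))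
        (summable_qrow_mul_g hq_nonneg hq_summable x hg0 hg1) (summable_qrow hq_summable x)
    have h3 : (∑' y, qrow q x y) ≤ qbar := tsum_qrow_le_qbar hq_nonneg hq_summable hqbar x
    have h4 : |q (some x) (some x) * g x| ≤ qbar := by
      rw [abs_mul, qdiag_eq hq_summable hq_diag x, abs_neg]
      have h5 : 0 ≤ q (some x) none + ∑' y, qrow q x y :=
        add_nonneg (hq0 x) (tsum_qrow_nonneg hq_nonneg x)
      have h6 : q (some x) none + (∑' y, qrow q x y) ≤ qbar := by
        have := hqbar (some x)
        rw [tsum_optionrow_split hq_summable x] at this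
        exact this
      have h7 : |g x| ≤ 1 := abs_le.mpr ⟨by linarith [hg0 x], hg1 x⟩
      calc |q (some x) none + ∑' y, qrow q x y| * |g x|
          ≤ (q (some x) none + ∑' y, qrow q x y) * 1 := by
            rw [abs_of_nonneg h5]
            exact mul_le_mul_of_nonneg_left h7 h5
        _ ≤ qbar := by linarith
    calc |q (some x) (some x) * g x + ∑' y, qrow q x y * g y|
        ≤ |q (some x) (some x) * g x| + |∑' y, qrow q x y * g y| := abs_add_le _ _
      _ ≤ qbar + qbar := add_le_add h4 (by rw [abs_of_nonneg h1]; linarith)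
      _ = 2 * qbar := by ring
  have hAabs : ∀ ξ, |A ξ| ≤ (N : ℝ) * (2 * qbar) := fun ξ => by
    calc |A ξ| ≤ ∑ i, |∑' y : Λ, q (some (ξ i)) (some y) * g y| :=
        Finset.abs_sum_le_sum_abs _ _
      _ ≤ ∑ _i : Fin N, 2 * qbar := Finset.sum_le_sum (fun i _ => habs (ξ i))
      _ = (N : ℝ) * (2 * qbar) := by simp [mul_comm]
  -- summabilities
  have hπs : Summable (π N) := (hπ_sum N hN).summable
  have hπ0 : ∀ ξ, 0 ≤ π N ξ := hπ_nonneg N hN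
  have hsS : Summable (fun ξ => π N ξ * S ξ) := by
    refine Summable.of_abs (Summable.of_nonneg_of_le (fun ξ => abs_nonneg _) (fun ξ => ?_)
      (hπs.mul_right (N : ℝ)))
    rw [abs_mul, abs_of_nonneg (hπ0 ξ), abs_of_nonneg (hS0 ξ)]
    exact mul_le_mul_of_nonneg_left (hSN ξ) (hπ0 ξ)
  have hsPP : Summable (fun ξ => π N ξ * PP ξ) := by
    refine Summable.of_abs (Summable.of_nonneg_of_le (fun ξ => abs_nonneg _) (fun ξ => ?_)
      (hπs.mul_right (C * (N : ℝ))))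
    rw [abs_mul, abs_of_nonneg (hπ0 ξ), abs_of_nonneg (hPP0 ξ)]
    refine mul_le_mul_of_nonneg_left ?_ (hπ0 ξ)
    calc PP ξ ≤ C * S ξ := hPPC ξ
      _ ≤ C * (N : ℝ) := mul_le_mul_of_nonneg_left (hSN ξ) hC0
  have hsA : Summable (fun ξ => π N ξ * A ξ) := by
    refine Summable.of_abs (Summable.of_nonneg_of_le (fun ξ => abs_nonneg _) (fun ξ => ?_)
      (hπs.mul_right ((N : ℝ) * (2 * qbar))))
    rw [abs_mul, abs_of_nonneg (hπ0 ξ)]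
    exact mul_le_mul_of_nonneg_left (hAabs ξ) (hπ0 ξ)
  -- the invariance identity
  have h0 : ∑' ξ : Fin N → Λ, π N ξ * (A ξ + PP ξ) = 0 := by
    have := hπ_inv N hN (gBCF N g hg0 hg1)
    rw [← this]
    refine tsum_congr fun ξ => ?_
    rw [Lf_eq hq_nonneg hq_summable hq_diag L hL hN g hg0 hg1 ξ]
  have h0' : (∑' ξ, π N ξ * A ξ) + (∑' ξ, π N ξ * PP ξ) = 0 := by
    rw [← Summable.tsum_add hsA hsPP]
    rw [← h0]
    exact tsum_congr fun ξ => by ring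
  have hPPle : (∑' ξ, π N ξ * PP ξ) ≤ C * ∑' ξ, π N ξ * S ξ := by
    calc (∑' ξ, π N ξ * PP ξ) ≤ ∑' ξ, C * (π N ξ * S ξ) := by
          refine Summable.tsum_le_tsum (fun ξ => ?_) hsPP (hsS.mul_left C)
          calc π N ξ * PP ξ ≤ π N ξ * (C * S ξ) :=
              mul_le_mul_of_nonneg_left (hPPC ξ) (hπ0 ξ)
            _ = C * (π N ξ * S ξ) := by ring
      _ = C * ∑' ξ, π N ξ * S ξ := tsum_mul_left
  linarith

end Stationarity

section QgBounds
variable {Λ : Type*} [DecidableEq Λ]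
variable {q : Option Λ → Option Λ → ℝ}

/-- indicator of the complement of a finite set -/
def gInd (H : Finset Λ) : Λ → ℝ := fun y => if y ∈ H then 0 else 1

lemma gInd_nonneg (H : Finset Λ) : ∀ y, 0 ≤ gInd H y := fun y => by
  unfold gInd; by_cases hy : y ∈ H <;> simp [hy]

lemma gInd_le_one (H : Finset Λ) : ∀ y, gInd H y ≤ 1 := fun y => by
  unfold gInd; by_cases hy : y ∈ H <;> simp [hy]

lemma tsum_ite_tail (f : Λ → ℝ) (hf : Summable f) (F : Finset Λ) :
    ∑' y, (if y ∈ F then 0 else f y) = (∑' y, f y) - ∑ y ∈ F, f y := by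
  have hdec : (fun y : Λ => if y ∈ F then 0 else f y)
      = fun y => f y - (if y ∈ F then f y else 0) := by
    funext y; by_cases hy : y ∈ F <;> simp [hy]
  rw [hdec, Summable.tsum_sub hf (summable_of_ne_finset_zero (s := F) (fun b hb => by simp [hb])),
    tsum_eq_sum (s := F) (f := fun y => if y ∈ F then f y else 0) (fun b hb => by simp [hb])]
  congr 1
  exact Finset.sum_congr rfl fun y hy => by simp [hy]

lemma summable_ite_tail
    (hq_nonneg : ∀ x y, x ≠ y → 0 ≤ q x y)
    (hq_summable : ∀ x, Summable (fun y : {y : Option Λ // y ≠ x} => q x (y : Option Λ)))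
    (x : Λ) (H : Finset Λ) :
    Summable (fun y : Λ => if y ∈ H then 0 else qrow q x y) :=
  Summable.of_nonneg_of_le
    (fun y => by by_cases hy : y ∈ H <;> simp [hy, qrow_nonneg hq_nonneg x y])
    (fun y => by by_cases hy : y ∈ H <;> simp [hy, qrow_nonneg hq_nonneg x y])
    (summable_qrow hq_summable x)

lemma Qg_in_eq (H : Finset Λ) {x : Λ} (hx : x ∈ H) :
    ∑' y : Λ, q (some x) (some y) * gInd H y
      = ∑' y : Λ, (if y ∈ H then 0 else qrow q x y) := by
  refine tsum_congr fun y => ?_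
  by_cases hy : y ∈ H
  · simp [gInd, hy]
  · have hyx : y ≠ x := fun h => hy (h ▸ hx)
    simp [gInd, hy, qrow, hyx]

lemma Qg_notin
    (hq_summable : ∀ x, Summable (fun y : {y : Option Λ // y ≠ x} => q x (y : Option Λ)))
    (hq_diag : ∀ x, q x x = -∑' y : {y : Option Λ // y ≠ x}, q x (y : Option Λ))
    (H : Finset Λ) (x : Λ) :
    ∑' y : Λ, q (some x) (some y) * gInd H y
      = -(q (some x) none) - ∑ y ∈ H, q (some x) (some y) := by
  have hdec : (fun y : Λ => q (some x) (some y) * gInd H y)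
      = fun y => q (some x) (some y) - (if y ∈ H then q (some x) (some y) else 0) := by
    funext y; by_cases hy : y ∈ H <;> simp [gInd, hy]
  rw [hdec, Summable.tsum_sub (summable_fullrow hq_summable x)
      (summable_of_ne_finset_zero (s := H) (fun b hb => by simp [hb])),
    tsum_fullrow hq_summable hq_diag x,
    tsum_eq_sum (s := H)
      (f := fun y => if y ∈ H then q (some x) (some y) else 0) (fun b hb => by simp [hb])]
  congr 1
  exact Finset.sum_congr rfl fun y hy => by simp [hy]

lemma abs_Qg_le
    (hq_nonneg : ∀ x y, x ≠ y → 0 ≤ q x y)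
    (hq_summable : ∀ x, Summable (fun y : {y : Option Λ // y ≠ x} => q x (y : Option Λ)))
    (hq_diag : ∀ x, q x x = -∑' y : {y : Option Λ // y ≠ x}, q x (y : Option Λ))
    {qbar : ℝ}
    (hqbar : ∀ x, (∑' y : {y : Option Λ // y ≠ x}, q x (y : Option Λ)) ≤ qbar)
    (x : Λ) {g : Λ → ℝ} (hg0 : ∀ y, 0 ≤ g y) (hg1 : ∀ y, g y ≤ 1) :
    |∑' y : Λ, q (some x) (some y) * g y| ≤ 2 * qbar := by
  have hq0 : ∀ x : Λ, 0 ≤ q (some x) none := q_none_nonneg hq_nonneg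
  rw [tsum_rowg_eq hq_nonneg hq_summable x hg0 hg1]
  have h1 : 0 ≤ ∑' y, qrow q x y * g y :=
    tsum_nonneg fun y => mul_nonneg (qrow_nonneg hq_nonneg x y) (hg0 y)
  have h2 : (∑' y, qrow q x y * g y) ≤ ∑' y, qrow q x y :=
    Summable.tsum_le_tsum (fun y => mul_le_of_le_one_right (qrow_nonneg hq_nonneg x y) (hg1 y))
      (summable_qrow_mul_g hq_nonneg hq_summable x hg0 hg1) (summable_qrow hq_summable x)
  have h3 : (∑' y, qrow q x y) ≤ qbar := tsum_qrow_le_qbar hq_nonneg hq_summable hqbar x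
  have h4 : |q (some x) (some x) * g x| ≤ qbar := by
    rw [abs_mul, qdiag_eq hq_summable hq_diag x, abs_neg]
    have h5 : 0 ≤ q (some x) none + ∑' y, qrow q x y :=
      add_nonneg (hq0 x) (tsum_qrow_nonneg hq_nonneg x)
    have h6 : q (some x) none + (∑' y, qrow q x y) ≤ qbar := by
      have := hqbar (some x)
      rw [tsum_optionrow_split hq_summable x] at this
      exact this
    have h7 : |g x| ≤ 1 := abs_le.mpr ⟨by linarith [hg0 x], hg1 x⟩
    calc |q (some x) none + ∑' y, qrow q x y| * |g x|
        ≤ (q (some x) none + ∑' y, qrow q x y) * 1 := by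
          rw [abs_of_nonneg h5]
          exact mul_le_mul_of_nonneg_left h7 h5
      _ ≤ qbar := by linarith
  calc |q (some x) (some x) * g x + ∑' y, qrow q x y * g y|
      ≤ |q (some x) (some x) * g x| + |∑' y, qrow q x y * g y| := abs_add_le _ _
    _ ≤ qbar + qbar := add_le_add h4 (by rw [abs_of_nonneg h1]; linarith)
    _ = 2 * qbar := by ring

end QgBounds

section StepBound
variable {Λ : Type*} [DecidableEq Λ] [TopologicalSpace Λ] [DiscreteTopology Λ]
variable {q : Option Λ → Option Λ → ℝ}

lemma summable_piS (π : (N : ℕ) → (Fin N → Λ) → ℝ)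
    (hπ_nonneg : ∀ N, 2 ≤ N → ∀ ξ, 0 ≤ π N ξ)
    (hπ_sum : ∀ N, 2 ≤ N → HasSum (π N) 1)
    {N : ℕ} (hN : 2 ≤ N) (g : Λ → ℝ) (hg0 : ∀ y, 0 ≤ g y) (hg1 : ∀ y, g y ≤ 1) :
    Summable (fun ξ : Fin N → Λ => π N ξ * ∑ i, g (ξ i)) := by
  refine Summable.of_abs (Summable.of_nonneg_of_le (fun ξ => abs_nonneg _) (fun ξ => ?_)
    (((hπ_sum N hN).summable).mul_right (N : ℝ)))
  have hS0 : 0 ≤ ∑ i, g (ξ i) := Finset.sum_nonneg (fun i _ => hg0 (ξ i))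
  have hSN : (∑ i, g (ξ i)) ≤ N := by
    calc (∑ i, g (ξ i)) ≤ ∑ _i : Fin N, 1 := Finset.sum_le_sum (fun i _ => hg1 (ξ i))
      _ = N := by simp
  rw [abs_mul, abs_of_nonneg (hπ_nonneg N hN ξ), abs_of_nonneg hS0]
  exact mul_le_mul_of_nonneg_left hSN (hπ_nonneg N hN ξ)

lemma sigma_nonneg (π : (N : ℕ) → (Fin N → Λ) → ℝ)
    (hπ_nonneg : ∀ N, 2 ≤ N → ∀ ξ, 0 ≤ π N ξ)
    {N : ℕ} (hN : 2 ≤ N) (g : Λ → ℝ) (hg0 : ∀ y, 0 ≤ g y) :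
    0 ≤ ∑' ξ : Fin N → Λ, π N ξ * ∑ i, g (ξ i) :=
  tsum_nonneg fun ξ => mul_nonneg (hπ_nonneg N hN ξ)
    (Finset.sum_nonneg (fun i _ => hg0 (ξ i)))

lemma sigma_le_N (π : (N : ℕ) → (Fin N → Λ) → ℝ)
    (hπ_nonneg : ∀ N, 2 ≤ N → ∀ ξ, 0 ≤ π N ξ)
    (hπ_sum : ∀ N, 2 ≤ N → HasSum (π N) 1)
    {N : ℕ} (hN : 2 ≤ N) (g : Λ → ℝ) (hg0 : ∀ y, 0 ≤ g y) (hg1 : ∀ y, g y ≤ 1) :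
    (∑' ξ : Fin N → Λ, π N ξ * ∑ i, g (ξ i)) ≤ N := by
  have h1 : (∑' ξ : Fin N → Λ, π N ξ * ∑ i, g (ξ i))
      ≤ ∑' ξ : Fin N → Λ, π N ξ * (N : ℝ) := by
    refine Summable.tsum_le_tsum (fun ξ => ?_) (summable_piS π hπ_nonneg hπ_sum hN g hg0 hg1)
      (((hπ_sum N hN).summable).mul_right (N : ℝ))
    refine mul_le_mul_of_nonneg_left ?_ (hπ_nonneg N hN ξ)
    calc (∑ i, g (ξ i)) ≤ ∑ _i : Fin N, 1 := Finset.sum_le_sum (fun i _ => hg1 (ξ i))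
      _ = N := by simp
  rw [tsum_mul_right, (hπ_sum N hN).tsum_eq, one_mul] at h1
  exact h1

lemma summable_piA
    (hq_nonneg : ∀ x y, x ≠ y → 0 ≤ q x y)
    (hq_summable : ∀ x, Summable (fun y : {y : Option Λ // y ≠ x} => q x (y : Option Λ)))
    (hq_diag : ∀ x, q x x = -∑' y : {y : Option Λ // y ≠ x}, q x (y : Option Λ))
    {qbar : ℝ}
    (hqbar : ∀ x, (∑' y : {y : Option Λ // y ≠ x}, q x (y : Option Λ)) ≤ qbar)
    (π : (N : ℕ) → (Fin N → Λ) → ℝ)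
    (hπ_nonneg : ∀ N, 2 ≤ N → ∀ ξ, 0 ≤ π N ξ)
    (hπ_sum : ∀ N, 2 ≤ N → HasSum (π N) 1)
    {N : ℕ} (hN : 2 ≤ N) (g : Λ → ℝ) (hg0 : ∀ y, 0 ≤ g y) (hg1 : ∀ y, g y ≤ 1) :
    Summable (fun ξ : Fin N → Λ =>
      π N ξ * ∑ i, ∑' y : Λ, q (some (ξ i)) (some y) * g y) := by
  refine Summable.of_abs (Summable.of_nonneg_of_le (fun ξ => abs_nonneg _) (fun ξ => ?_)
    (((hπ_sum N hN).summable).mul_right ((N : ℝ) * (2 * qbar))))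
  rw [abs_mul, abs_of_nonneg (hπ_nonneg N hN ξ)]
  refine mul_le_mul_of_nonneg_left ?_ (hπ_nonneg N hN ξ)
  calc |∑ i, ∑' y : Λ, q (some (ξ i)) (some y) * g y|
      ≤ ∑ i, |∑' y : Λ, q (some (ξ i)) (some y) * g y| := Finset.abs_sum_le_sum_abs _ _
    _ ≤ ∑ _i : Fin N, 2 * qbar := Finset.sum_le_sum
        (fun i _ => abs_Qg_le hq_nonneg hq_summable hq_diag hqbar (ξ i) hg0 hg1)
    _ = (N : ℝ) * (2 * qbar) := by simp [mul_comm]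

lemma step_bound
    (hq_nonneg : ∀ x y, x ≠ y → 0 ≤ q x y)
    (hq_summable : ∀ x, Summable (fun y : {y : Option Λ // y ≠ x} => q x (y : Option Λ)))
    (hq_diag : ∀ x, q x x = -∑' y : {y : Option Λ // y ≠ x}, q x (y : Option Λ))
    {qbar : ℝ}
    (hqbar : ∀ x, (∑' y : {y : Option Λ // y ≠ x}, q x (y : Option Λ)) ≤ qbar)
    (hqbar0 : 0 ≤ qbar)
    {C α lam e' : ℝ} (hC0 : 0 ≤ C) (hCq : C ≤ qbar) (hq0C : ∀ x : Λ, q (some x) none ≤ C)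
    (hαC : C < α) (hα2q : α ≤ 2 * qbar)
    (hlam : lam = 3 * qbar + 1) (he' : 0 ≤ e')
    (L : (N : ℕ) →
      BoundedContinuousFunction (Fin N → Λ) ℝ →L[ℝ] BoundedContinuousFunction (Fin N → Λ) ℝ)
    (hL : ∀ (N : ℕ), 2 ≤ N →
      ∀ (f : BoundedContinuousFunction (Fin N → Λ) ℝ) (ξ : Fin N → Λ),
      L N f ξ = ∑ i : Fin N, ∑' y : {y : Λ // y ≠ ξ i},
        (q (some (ξ i)) (some (y : Λ))
            + q (some (ξ i)) none * etaCount ξ (y : Λ) / ((N : ℝ) - 1))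
          * (f (Function.update ξ i (y : Λ)) - f ξ))
    (π : (N : ℕ) → (Fin N → Λ) → ℝ)
    (hπ_nonneg : ∀ N, 2 ≤ N → ∀ ξ, 0 ≤ π N ξ)
    (hπ_sum : ∀ N, 2 ≤ N → HasSum (π N) 1)
    (hπ_inv : ∀ N, 2 ≤ N → ∀ f : BoundedContinuousFunction (Fin N → Λ) ℝ,
      ∑' ξ : Fin N → Λ, π N ξ * L N f ξ = 0)
    {N : ℕ} (hN : 2 ≤ N)
    (G0 G H : Finset Λ) (hGH : G ⊆ H) (hG0H : G0 ⊆ H)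
    (hcmin : (α + C)/2 ≤ ∑ y ∈ G0, cmin q y)
    (htail : ∀ x ∈ G, (∑' y : Λ, if y ∈ H then 0 else qrow q x y) ≤ lam * e') :
    (lam - C) * (∑' ξ : Fin N → Λ, π N ξ * ∑ i, gInd H (ξ i))
      ≤ lam * (e' * (N : ℝ)
          + (1 - (α + C)/(2*lam)) * ∑' ξ : Fin N → Λ, π N ξ * ∑ i, gInd G (ξ i)) := by
  classical
  have hlam0 : 0 < lam := by rw [hlam]; linarith
  set β : ℝ := 1 - (α + C)/(2*lam) with hβ
  have hlamβ : lam * β = lam - (α + C)/2 := by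
    rw [hβ]; field_simp
  have hβ0 : 0 ≤ β := by
    have h1 : (α + C) ≤ 2 * lam := by rw [hlam]; linarith
    rw [hβ, sub_nonneg, div_le_one (by linarith : (0:ℝ) < 2 * lam)]
    exact h1
  -- the stationarity inequality for g = gInd H
  have hstat := stationarity_bound hq_nonneg hq_summable hq_diag hqbar hC0 hq0C
    L hL π hπ_nonneg hπ_sum hπ_inv hN (gInd H) (gInd_nonneg H) (gInd_le_one H)
  -- pointwise bound
  have hpt : ∀ x : Λ, lam * gInd H x + (∑' y : Λ, q (some x) (some y) * gInd H y)
      ≤ lam * (e' + β * gInd G x) := by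
    intro x
    have hle' : 0 ≤ lam * e' := mul_nonneg hlam0.le he'
    by_cases hxH : x ∈ H
    · have hgx : gInd H x = 0 := by simp [gInd, hxH]
      rw [hgx, Qg_in_eq H hxH]
      by_cases hxG : x ∈ G
      · have h1 := htail x hxG
        have hgG : gInd G x = 0 := by simp [gInd, hxG]
        rw [hgG]
        have : lam * (e' + β * 0) = lam * e' := by ring
        rw [this]
        linarith
      · have hgG : gInd G x = 1 := by simp [gInd, hxG]
        rw [hgG]
        have h1 : (∑' y : Λ, if y ∈ H then 0 else qrow q x y) ≤ ∑' y, qrow q x y := by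
          refine Summable.tsum_le_tsum (fun y => ?_) (summable_ite_tail hq_nonneg hq_summable x H)
            (summable_qrow hq_summable x)
          by_cases hy : y ∈ H <;> simp [hy, qrow_nonneg hq_nonneg x y]
        have h2 : (∑' y, qrow q x y) ≤ qbar :=
          tsum_qrow_le_qbar hq_nonneg hq_summable hqbar x
        have h3 : qbar ≤ lam * β := by rw [hlamβ, hlam]; linarith
        have h4 : lam * (e' + β * 1) = lam * e' + lam * β := by ring
        rw [h4]
        linarith
    · have hgx : gInd H x = 1 := by simp [gInd, hxH]
      have hxG : x ∉ G := fun h => hxH (hGH h)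
      have hgG : gInd G x = 1 := by simp [gInd, hxG]
      rw [hgx, hgG, Qg_notin hq_summable hq_diag H x]
      have h1 : (α + C)/2 ≤ ∑ y ∈ H, q (some x) (some y) := by
        calc (α + C)/2 ≤ ∑ y ∈ G0, cmin q y := hcmin
          _ ≤ ∑ y ∈ H, cmin q y := Finset.sum_le_sum_of_subset_of_nonneg hG0H
              (fun y _ _ => cmin_nonneg hq_nonneg y)
          _ ≤ ∑ y ∈ H, q (some x) (some y) := Finset.sum_le_sum
              (fun y hy => cmin_le hq_nonneg (fun hxy : x = y => hxH (hxy ▸ hy)))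
      have h2 : 0 ≤ q (some x) none := q_none_nonneg hq_nonneg x
      have hle' : 0 ≤ lam * e' := mul_nonneg hlam0.le he'
      have h4 : lam * (e' + β * 1) = lam * e' + lam * β := by ring
      rw [h4, hlamβ]
      linarith
  -- per-configuration bound
  have hperxi : ∀ ξ : Fin N → Λ,
      lam * (∑ i, gInd H (ξ i)) + (∑ i, ∑' y : Λ, q (some (ξ i)) (some y) * gInd H y)
        ≤ lam * (e' * (N : ℝ) + β * ∑ i, gInd G (ξ i)) := by
    intro ξ
    have h := Finset.sum_le_sum (s := Finset.univ)
      (f := fun i => lam * gInd H (ξ i) + ∑' y : Λ, q (some (ξ i)) (some y) * gInd H y)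
      (g := fun i => lam * (e' + β * gInd G (ξ i))) (fun i _ => hpt (ξ i))
    calc lam * (∑ i, gInd H (ξ i)) + (∑ i, ∑' y : Λ, q (some (ξ i)) (some y) * gInd H y)
        = ∑ i, (lam * gInd H (ξ i) + ∑' y : Λ, q (some (ξ i)) (some y) * gInd H y) := by
          rw [Finset.sum_add_distrib, Finset.mul_sum]
      _ ≤ ∑ i, lam * (e' + β * gInd G (ξ i)) := h
      _ = lam * (e' * (N : ℝ) + β * ∑ i, gInd G (ξ i)) := by
          rw [← Finset.mul_sum]
          congr 1
          rw [Finset.sum_add_distrib, Finset.sum_const, ← Finset.mul_sum]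
          simp only [Finset.card_univ, Fintype.card_fin, nsmul_eq_mul]
          ring
  -- multiply by π and sum
  have hπs := (hπ_sum N hN).summable
  have hπ0 := hπ_nonneg N hN
  have hsSH := summable_piS π hπ_nonneg hπ_sum hN (gInd H) (gInd_nonneg H) (gInd_le_one H)
  have hsSG := summable_piS π hπ_nonneg hπ_sum hN (gInd G) (gInd_nonneg G) (gInd_le_one G)
  have hsA := summable_piA hq_nonneg hq_summable hq_diag hqbar π hπ_nonneg hπ_sum hN
    (gInd H) (gInd_nonneg H) (gInd_le_one H)
  have hsum1 : Summable (fun ξ : Fin N → Λ =>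
      π N ξ * (lam * (∑ i, gInd H (ξ i))
        + ∑ i, ∑' y : Λ, q (some (ξ i)) (some y) * gInd H y)) := by
    have : (fun ξ : Fin N → Λ =>
        π N ξ * (lam * (∑ i, gInd H (ξ i))
          + ∑ i, ∑' y : Λ, q (some (ξ i)) (some y) * gInd H y))
        = fun ξ => lam * (π N ξ * ∑ i, gInd H (ξ i))
            + π N ξ * ∑ i, ∑' y : Λ, q (some (ξ i)) (some y) * gInd H y := by
      funext ξ; ring
    rw [this]
    exact (hsSH.mul_left lam).add hsA
  have hsum2 : Summable (fun ξ : Fin N → Λ =>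
      π N ξ * (lam * (e' * (N : ℝ) + β * ∑ i, gInd G (ξ i)))) := by
    have : (fun ξ : Fin N → Λ =>
        π N ξ * (lam * (e' * (N : ℝ) + β * ∑ i, gInd G (ξ i))))
        = fun ξ => (lam * (e' * (N : ℝ))) * π N ξ
            + (lam * β) * (π N ξ * ∑ i, gInd G (ξ i)) := by
      funext ξ; ring
    rw [this]
    exact (hπs.mul_left _).add (hsSG.mul_left _)
  have hSig : (∑' ξ : Fin N → Λ, π N ξ * (lam * (∑ i, gInd H (ξ i))
        + ∑ i, ∑' y : Λ, q (some (ξ i)) (some y) * gInd H y))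
      ≤ ∑' ξ : Fin N → Λ, π N ξ * (lam * (e' * (N : ℝ) + β * ∑ i, gInd G (ξ i))) :=
    Summable.tsum_le_tsum (fun ξ => mul_le_mul_of_nonneg_left (hperxi ξ) (hπ0 ξ)) hsum1 hsum2
  -- expand both sides
  have hlhs : (∑' ξ : Fin N → Λ, π N ξ * (lam * (∑ i, gInd H (ξ i))
        + ∑ i, ∑' y : Λ, q (some (ξ i)) (some y) * gInd H y))
      = lam * (∑' ξ : Fin N → Λ, π N ξ * ∑ i, gInd H (ξ i))
        + ∑' ξ : Fin N → Λ, π N ξ * ∑ i, ∑' y : Λ, q (some (ξ i)) (some y) * gInd H y := by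
    have h1 : (fun ξ : Fin N → Λ => π N ξ * (lam * (∑ i, gInd H (ξ i))
          + ∑ i, ∑' y : Λ, q (some (ξ i)) (some y) * gInd H y))
        = fun ξ => lam * (π N ξ * ∑ i, gInd H (ξ i))
            + π N ξ * ∑ i, ∑' y : Λ, q (some (ξ i)) (some y) * gInd H y := by
      funext ξ; ring
    rw [h1, Summable.tsum_add (hsSH.mul_left lam) hsA, tsum_mul_left]
  have hrhs : (∑' ξ : Fin N → Λ, π N ξ * (lam * (e' * (N : ℝ) + β * ∑ i, gInd G (ξ i))))
      = lam * (e' * (N : ℝ))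
        + (lam * β) * ∑' ξ : Fin N → Λ, π N ξ * ∑ i, gInd G (ξ i) := by
    have h1 : (fun ξ : Fin N → Λ =>
        π N ξ * (lam * (e' * (N : ℝ) + β * ∑ i, gInd G (ξ i))))
        = fun ξ => (lam * (e' * (N : ℝ))) * π N ξ
            + (lam * β) * (π N ξ * ∑ i, gInd G (ξ i)) := by
      funext ξ; ring
    rw [h1, Summable.tsum_add (hπs.mul_left _) (hsSG.mul_left _), tsum_mul_left, tsum_mul_left,
      (hπ_sum N hN).tsum_eq, mul_one]
  rw [hlhs, hrhs] at hSig
  have hgoal : lam * (e' * (N : ℝ)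
      + β * ∑' ξ : Fin N → Λ, π N ξ * ∑ i, gInd G (ξ i))
      = lam * (e' * (N : ℝ))
        + (lam * β) * ∑' ξ : Fin N → Λ, π N ξ * ∑ i, gInd G (ξ i) := by ring
  rw [hgoal]
  linarith
end StepBound

section Swap
variable {Λ : Type*} [DecidableEq Λ] [TopologicalSpace Λ] [DiscreteTopology Λ]

lemma etaCount_le_N {N : ℕ} (ξ : Fin N → Λ) (y : Λ) : etaCount ξ y ≤ N := by
  unfold etaCount
  have := Finset.card_filter_le Finset.univ (fun i => ξ i = y)
  calc ((Finset.univ.filter fun i => ξ i = y).card : ℝ)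
      ≤ ((Finset.univ : Finset (Fin N)).card : ℝ) := by exact_mod_cast this
    _ = N := by simp

lemma tsum_eta_subtype {N : ℕ} (ξ : Fin N → Λ) (G : Finset Λ) :
    ∑' x : {x : Λ // x ∉ G}, etaCount ξ (x : Λ) = ∑ i, gInd G (ξ i) := by
  have h1 : ∑' x : ({x : Λ | x ∉ G} : Set Λ), etaCount ξ (x : Λ)
      = ∑' x : Λ, ({x : Λ | x ∉ G} : Set Λ).indicator (etaCount ξ) x :=
    tsum_subtype _ _
  have h2 : ∑' x : Λ, ({x : Λ | x ∉ G} : Set Λ).indicator (etaCount ξ) x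
      = ∑' x : Λ, etaCount ξ x * gInd G x := by
    refine tsum_congr fun x => ?_
    by_cases hx : x ∈ G <;> simp [Set.indicator_apply, gInd, hx]
  exact (h1.trans h2).trans (tsum_eta_mul ξ (gInd G))

lemma summable_eta_subtype {N : ℕ} (ξ : Fin N → Λ) (G : Finset Λ) (c : ℝ) :
    Summable (fun x : {x : Λ // x ∉ G} => c * etaCount ξ (x : Λ)) := by
  refine summable_of_ne_finset_zero
    (s := (Finset.image ξ Finset.univ).subtype (fun x => x ∉ G)) (fun x hx => ?_)
  have hxim : (x : Λ) ∉ Finset.image ξ Finset.univ := by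
    intro hmem
    exact hx (Finset.mem_subtype.mpr hmem)
  rw [etaCount_eq_zero ξ hxim, mul_zero]

lemma tail_eq (π : (N : ℕ) → (Fin N → Λ) → ℝ)
    (hπ_nonneg : ∀ N, 2 ≤ N → ∀ ξ, 0 ≤ π N ξ)
    (hπ_sum : ∀ N, 2 ≤ N → HasSum (π N) 1)
    {N : ℕ} (hN : 2 ≤ N) (G : Finset Λ) :
    (∑' x : {x : Λ // x ∉ G}, (∑' ξ : Fin N → Λ, π N ξ * etaCount ξ (x : Λ)) / N)
      = (∑' ξ : Fin N → Λ, π N ξ * ∑ i, gInd G (ξ i)) / N := by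
  rw [tsum_div_const]
  congr 1
  have hπ0 := hπ_nonneg N hN
  have hπs := (hπ_sum N hN).summable
  have hinner : ∀ ξ : Fin N → Λ,
      (∑' x : {x : Λ // x ∉ G}, π N ξ * etaCount ξ (x : Λ))
        = π N ξ * ∑ i, gInd G (ξ i) := by
    intro ξ
    rw [tsum_mul_left, tsum_eta_subtype ξ G]
  have hrowsum : ∀ ξ : Fin N → Λ,
      Summable (fun x : {x : Λ // x ∉ G} => π N ξ * etaCount ξ (x : Λ)) :=
    fun ξ => summable_eta_subtype ξ G (π N ξ)
  have hcolsum : ∀ x : {x : Λ // x ∉ G},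
      Summable (fun ξ : Fin N → Λ => π N ξ * etaCount ξ (x : Λ)) := by
    intro x
    refine Summable.of_abs (Summable.of_nonneg_of_le (fun ξ => abs_nonneg _) (fun ξ => ?_)
      (hπs.mul_right (N : ℝ)))
    rw [abs_mul, abs_of_nonneg (hπ0 ξ), abs_of_nonneg (etaCount_nonneg ξ _)]
    exact mul_le_mul_of_nonneg_left (etaCount_le_N ξ _) (hπ0 ξ)
  have huncurry : Summable (fun p : (Fin N → Λ) × {x : Λ // x ∉ G} =>
      π N p.1 * etaCount p.1 (p.2 : Λ)) := by
    rw [summable_prod_of_nonneg (fun p => mul_nonneg (hπ0 p.1) (etaCount_nonneg p.1 _))]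
    constructor
    · exact hrowsum
    · refine Summable.of_nonneg_of_le
        (fun ξ => tsum_nonneg fun x => mul_nonneg (hπ0 ξ) (etaCount_nonneg ξ _))
        (fun ξ => ?_) (summable_piS π hπ_nonneg hπ_sum hN (gInd G)
          (gInd_nonneg G) (gInd_le_one G))
      rw [hinner ξ]
  calc (∑' x : {x : Λ // x ∉ G}, ∑' ξ : Fin N → Λ, π N ξ * etaCount ξ (x : Λ))
      = ∑' ξ : Fin N → Λ, ∑' x : {x : Λ // x ∉ G}, π N ξ * etaCount ξ (x : Λ) :=
        Summable.tsum_comm' huncurry hrowsum hcolsum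
    _ = ∑' ξ : Fin N → Λ, π N ξ * ∑ i, gInd G (ξ i) := tsum_congr hinner

end Swap

lemma cmin_le_qbar {Λ : Type*} [DecidableEq Λ] {q : Option Λ → Option Λ → ℝ}
    (hq_nonneg : ∀ x y, x ≠ y → 0 ≤ q x y)
    (hq_summable : ∀ x, Summable (fun y : {y : Option Λ // y ≠ x} => q x (y : Option Λ)))
    {qbar : ℝ}
    (hqbar : ∀ x, (∑' y : {y : Option Λ // y ≠ x}, q x (y : Option Λ)) ≤ qbar)
    (hqbar0 : 0 ≤ qbar) (z : Λ) :
    cmin q z ≤ qbar := by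
  by_cases h : Nonempty {x : Λ // x ≠ z}
  · obtain ⟨x₁⟩ := h
    have h1 : cmin q z ≤ q (some ↑x₁) (some z) := cmin_le hq_nonneg x₁.2
    have h2 : q (some ↑x₁) (some z)
        ≤ ∑' y : {y : Option Λ // y ≠ some ↑x₁}, q (some ↑x₁) (y : Option Λ) := by
      have hz : (some z : Option Λ) ≠ some ↑x₁ := by
        simp only [ne_eq, Option.some.injEq]
        exact fun hh => x₁.2 hh.symm
      exact Summable.le_tsum (hq_summable (some ↑x₁)) ⟨some z, hz⟩
        (fun j _ => hq_nonneg _ _ (Ne.symm j.2))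
    exact h1.trans (h2.trans (hqbar _))
  · rw [not_nonempty_iff] at h
    unfold cmin
    rw [iInf, Set.range_eq_empty, Real.sInf_empty]
    exact hqbar0

/-- under `α > C`, the family `(ρ^N, N ≥ 2)` of stationary mean empirical
measures of the Fleming–Viot processes is tight. -/
theorem fv_stationary_tightness
    {Λ : Type*} [Countable Λ] [Nonempty Λ] [DecidableEq Λ]
    [TopologicalSpace Λ] [DiscreteTopology Λ]
    -- the rate matrix Q on Λ ∪ {0} (`none` is the absorbing state 0)
    (q : Option Λ → Option Λ → ℝ)
    (hq_nonneg : ∀ x y, x ≠ y → 0 ≤ q x y)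
    (hq_absorb : ∀ y, q none y = 0)
    (hq_summable : ∀ x, Summable (fun y : {y : Option Λ // y ≠ x} => q x (y : Option Λ)))
    (hq_diag : ∀ x, q x x = -∑' y : {y : Option Λ // y ≠ x}, q x (y : Option Λ))
    (qbar : ℝ)
    (hqbar : ∀ x, (∑' y : {y : Option Λ // y ≠ x}, q x (y : Option Λ)) ≤ qbar)
    -- ergodicity coefficient and maximal absorption rate
    (α C : ℝ)
    (hα : α = ∑' z : Λ, ⨅ x : {x : Λ // x ≠ z}, q (some (x : Λ)) (some z))
    (hC : C = ⨆ x : Λ, q (some x) none)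
    (hαC : C < α)
    -- the transition semigroup P of Q
    (P : ℝ → Option Λ → Option Λ → ℝ)
    (hP_nonneg : ∀ t, 0 ≤ t → ∀ x y, 0 ≤ P t x y)
    (hP_rowsum : ∀ t, 0 ≤ t → ∀ x, HasSum (P t x) 1)
    (hP_zero : ∀ x y, P 0 x y = if x = y then 1 else 0)
    (hP_CK : ∀ s t, 0 ≤ s → 0 ≤ t → ∀ x y,
      P (t + s) x y = ∑' z : Option Λ, P t x z * P s z y)
    (hP_forward : ∀ t, 0 < t → ∀ z : Λ, ∀ x : Option Λ,
      HasDerivAt (fun s => P s (some z) x)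
        (∑' y : Λ, P t (some z) (some y) * q (some y) x) t)
    (hP_meas : ∀ z x, Measurable (fun t => P t z x))
    -- the generators of the Fleming–Viot processes with N particles, bounded linear
    -- operators on the bounded (continuous, for the discrete topology) functions
    (L : (N : ℕ) →
      BoundedContinuousFunction (Fin N → Λ) ℝ →L[ℝ] BoundedContinuousFunction (Fin N → Λ) ℝ)
    (hL : ∀ (N : ℕ), 2 ≤ N →
      ∀ (f : BoundedContinuousFunction (Fin N → Λ) ℝ) (ξ : Fin N → Λ),
      L N f ξ = ∑ i : Fin N, ∑' y : {y : Λ // y ≠ ξ i},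
        (q (some (ξ i)) (some (y : Λ))
            + q (some (ξ i)) none * etaCount ξ (y : Λ) / ((N : ℝ) - 1))
          * (f (Function.update ξ i (y : Λ)) - f ξ))
    -- π^N is the (unique) invariant probability measure of the N-particle FV process
    (π : (N : ℕ) → (Fin N → Λ) → ℝ)
    (hπ_nonneg : ∀ N, 2 ≤ N → ∀ ξ, 0 ≤ π N ξ)
    (hπ_sum : ∀ N, 2 ≤ N → HasSum (π N) 1)
    (hπ_inv : ∀ N, 2 ≤ N → ∀ f : BoundedContinuousFunction (Fin N → Λ) ℝ,
      ∑' ξ : Fin N → Λ, π N ξ * L N f ξ = 0) :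
    ∀ ε : ℝ, 0 < ε → ∃ G : Finset Λ, ∀ N : ℕ, 2 ≤ N →
      (∑' x : {x : Λ // x ∉ G},
        (∑' ξ : Fin N → Λ, π N ξ * etaCount ξ (x : Λ)) / N) < ε := by
  classical
  intro ε hε
  obtain ⟨x₀⟩ := (inferInstance : Nonempty Λ)
  -- basic constants
  have hqbar0 : 0 ≤ qbar :=
    le_trans (tsum_nonneg fun y : {y : Option Λ // y ≠ some x₀} =>
      hq_nonneg _ _ (Ne.symm y.2)) (hqbar (some x₀))
  have hbdd : BddAbove (Set.range fun x : Λ => q (some x) none) :=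
    ⟨qbar, by rintro r ⟨x, rfl⟩; exact q_none_le_qbar hq_nonneg hq_summable hqbar x⟩
  have hq0C : ∀ x : Λ, q (some x) none ≤ C := fun x => hC ▸ le_ciSup hbdd x
  have hC0 : 0 ≤ C := le_trans (q_none_nonneg hq_nonneg x₀) (hq0C x₀)
  have hCq : C ≤ qbar := by
    rw [hC]
    exact ciSup_le fun x => q_none_le_qbar hq_nonneg hq_summable hqbar x
  -- facts about cmin
  have hcsum : Summable (cmin q) := summable_cmin hq_nonneg hq_summable
  have hαtsum : α = ∑' z, cmin q z := hα
  have hα2q : α ≤ 2 * qbar := by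
    rw [hαtsum]
    have hcq := cmin_le_qbar hq_nonneg hq_summable hqbar hqbar0
    have hdomsum : Summable (fun z : Λ =>
        qrow q x₀ z + (if z = x₀ then cmin q x₀ else 0)) :=
      (summable_qrow hq_summable x₀).add
        (summable_of_ne_finset_zero (s := {x₀}) (by intro b hb; simp at hb; simp [hb]))
    have h1 : (∑' z, cmin q z)
        ≤ ∑' z : Λ, (qrow q x₀ z + (if z = x₀ then cmin q x₀ else 0)) := by
      refine Summable.tsum_le_tsum (fun z => ?_) hcsum hdomsum
      by_cases hz : z = x₀
      · subst hz; simp [qrow, qrow_nonneg hq_nonneg]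
      · have := cmin_le (q := q) hq_nonneg (fun h : x₀ = z => hz h.symm)
        simpa [qrow, hz] using this
    have h2 : (∑' z : Λ, (qrow q x₀ z + (if z = x₀ then cmin q x₀ else 0)))
        = (∑' z, qrow q x₀ z) + cmin q x₀ := by
      rw [Summable.tsum_add (summable_qrow hq_summable x₀)
        (summable_of_ne_finset_zero (s := {x₀}) (by intro b hb; simp at hb; simp [hb])),
        tsum_ite_eq x₀ (fun _ => cmin q x₀)]
    have h3 := tsum_qrow_le_qbar hq_nonneg hq_summable hqbar x₀
    have h4 := hcq x₀
    linarith
  -- the contraction constants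
  set lam : ℝ := 3 * qbar + 1 with hlamdef
  have hlam0 : 0 < lam := by rw [hlamdef]; linarith
  have hlamC : 0 < lam - C := by rw [hlamdef]; linarith
  set β : ℝ := 1 - (α + C) / (2 * lam) with hβdef
  have hlamβ : lam * β = lam - (α + C) / 2 := by
    rw [hβdef]; field_simp
  have hβ0 : 0 ≤ β := by
    have h1 : (α + C) ≤ 2 * lam := by rw [hlamdef]; linarith
    rw [hβdef, sub_nonneg, div_le_one (by linarith : (0:ℝ) < 2 * lam)]
    exact h1
  set r : ℝ := lam * β / (lam - C) with hrdef
  have hr0 : 0 ≤ r := div_nonneg (mul_nonneg hlam0.le hβ0) hlamC.le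
  have hr1 : r < 1 := by
    rw [hrdef, div_lt_one hlamC, hlamβ]
    linarith
  obtain ⟨k, hk⟩ := exists_pow_lt_of_lt_one (half_pos hε) hr1
  set e : ℝ := ε * (1 - r) / 4 with hedef
  have he0 : 0 < e := by
    have : 0 < 1 - r := by linarith
    rw [hedef]; positivity
  set e' : ℝ := e * (lam - C) / lam with he'def
  have he'0 : 0 < e' := by
    have := mul_pos he0 hlamC
    rw [he'def]; positivity
  have hlame' : lam * e' = e * (lam - C) := by
    rw [he'def]; field_simp
  have hrlamC : lam * β = r * (lam - C) := by
    rw [hrdef]; field_simp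
  -- choice of G0
  have hG0ex : ∃ G0 : Finset Λ, (α + C) / 2 ≤ ∑ y ∈ G0, cmin q y := by
    have hhs : HasSum (cmin q) α := by
      rw [hαtsum]; exact hcsum.hasSum
    have hlt : (α + C) / 2 < α := by linarith
    have hev := hhs.eventually (eventually_gt_nhds hlt)
    obtain ⟨s, hs2⟩ := hev.exists
    exact ⟨s, hs2.le⟩
  obtain ⟨G0, hG0⟩ := hG0ex
  -- tail choice function
  have hFex : ∀ x : Λ, ∃ Fx : Finset Λ,
      (∑' y, qrow q x y) - ∑ y ∈ Fx, qrow q x y < lam * e' := by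
    intro x
    have hhs := (summable_qrow hq_summable x).hasSum
    have hlame'0 : 0 < lam * e' := mul_pos hlam0 he'0
    have hlt : (∑' y, qrow q x y) - lam * e' < ∑' y, qrow q x y := by linarith
    have hev := hhs.eventually (eventually_gt_nhds hlt)
    obtain ⟨s, hs2⟩ := hev.exists
    exact ⟨s, by linarith⟩
  choose F hFspec using hFex
  -- the recursion
  have hrec : ∀ j : ℕ, ∃ G : Finset Λ, G0 ⊆ G ∧ ∀ N : ℕ, 2 ≤ N →
      (∑' ξ : Fin N → Λ, π N ξ * ∑ i, gInd G (ξ i)) / N ≤ r ^ j + e / (1 - r) := by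
    intro j
    induction j with
    | zero =>
      refine ⟨G0, Finset.Subset.refl G0, fun N hN => ?_⟩
      have hN0 : (0:ℝ) < N := by
        have : (2:ℝ) ≤ (N:ℝ) := by exact_mod_cast hN
        linarith
      have h1 := sigma_le_N π hπ_nonneg hπ_sum hN (gInd G0) (gInd_nonneg G0) (gInd_le_one G0)
      have h2 : (∑' ξ : Fin N → Λ, π N ξ * ∑ i, gInd G0 (ξ i)) / N ≤ 1 :=
        (div_le_one hN0).mpr h1
      have h3 : 0 ≤ e / (1 - r) := div_nonneg he0.le (by linarith)
      rw [pow_zero]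
      linarith
    | succ j ih =>
      obtain ⟨G, hG0G, hG⟩ := ih
      refine ⟨(G ∪ G0) ∪ G.biUnion F, ?_, fun N hN => ?_⟩
      · exact Finset.Subset.trans (Finset.subset_union_right)
          (Finset.subset_union_left)
      set H : Finset Λ := (G ∪ G0) ∪ G.biUnion F with hHdef
      have hGH : G ⊆ H := Finset.Subset.trans Finset.subset_union_left
        Finset.subset_union_left
      have hG0H : G0 ⊆ H := Finset.Subset.trans Finset.subset_union_right
        Finset.subset_union_left
      have hFH : ∀ x ∈ G, F x ⊆ H := fun x hx =>
        Finset.Subset.trans (Finset.subset_biUnion_of_mem F hx) Finset.subset_union_right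
      have htail : ∀ x ∈ G, (∑' y : Λ, if y ∈ H then 0 else qrow q x y) ≤ lam * e' := by
        intro x hx
        rw [tsum_ite_tail (qrow q x) (summable_qrow hq_summable x) H]
        have hsub : (∑ y ∈ F x, qrow q x y) ≤ ∑ y ∈ H, qrow q x y :=
          Finset.sum_le_sum_of_subset_of_nonneg (hFH x hx)
            (fun y _ _ => qrow_nonneg hq_nonneg x y)
        linarith [hFspec x]
      have hstep := step_bound hq_nonneg hq_summable hq_diag hqbar hqbar0 hC0 hCq hq0C
        hαC hα2q hlamdef he'0.le L hL π hπ_nonneg hπ_sum hπ_inv hN G0 G H hGH hG0H hG0 htail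
      rw [← hβdef] at hstep
      have hN0 : (0:ℝ) < N := by
        have : (2:ℝ) ≤ (N:ℝ) := by exact_mod_cast hN
        linarith
      have hsG := hG N hN
      have hs0 : 0 ≤ ∑' ξ : Fin N → Λ, π N ξ * ∑ i, gInd G (ξ i) :=
        sigma_nonneg π hπ_nonneg hN (gInd G) (gInd_nonneg G)
      have hkey : (∑' ξ : Fin N → Λ, π N ξ * ∑ i, gInd H (ξ i))
          ≤ e * N + r * ∑' ξ : Fin N → Λ, π N ξ * ∑ i, gInd G (ξ i) := by
        have h3 : (lam - C) * (∑' ξ : Fin N → Λ, π N ξ * ∑ i, gInd H (ξ i))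
            ≤ (lam - C) * (e * N + r * ∑' ξ : Fin N → Λ, π N ξ * ∑ i, gInd G (ξ i)) := by
          calc (lam - C) * (∑' ξ : Fin N → Λ, π N ξ * ∑ i, gInd H (ξ i))
              ≤ lam * (e' * (N : ℝ)
                  + β * ∑' ξ : Fin N → Λ, π N ξ * ∑ i, gInd G (ξ i)) := hstep
            _ = (lam * e') * (N : ℝ)
                  + (lam * β) * ∑' ξ : Fin N → Λ, π N ξ * ∑ i, gInd G (ξ i) := by ring
            _ = (e * (lam - C)) * (N : ℝ)
                  + (r * (lam - C)) * ∑' ξ : Fin N → Λ, π N ξ * ∑ i, gInd G (ξ i) := by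
                rw [hlame', hrlamC]
            _ = (lam - C) * (e * N + r * ∑' ξ : Fin N → Λ, π N ξ * ∑ i, gInd G (ξ i)) := by
                ring
        exact le_of_mul_le_mul_left h3 hlamC
      have hdiv : (∑' ξ : Fin N → Λ, π N ξ * ∑ i, gInd H (ξ i)) / N
          ≤ e + r * ((∑' ξ : Fin N → Λ, π N ξ * ∑ i, gInd G (ξ i)) / N) := by
        rw [div_le_iff₀ hN0]
        calc (∑' ξ : Fin N → Λ, π N ξ * ∑ i, gInd H (ξ i))
            ≤ e * N + r * ∑' ξ : Fin N → Λ, π N ξ * ∑ i, gInd G (ξ i) := hkey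
          _ = (e + r * ((∑' ξ : Fin N → Λ, π N ξ * ∑ i, gInd G (ξ i)) / N)) * N := by
              field_simp
      have hmono : r * ((∑' ξ : Fin N → Λ, π N ξ * ∑ i, gInd G (ξ i)) / N)
          ≤ r * (r ^ j + e / (1 - r)) := mul_le_mul_of_nonneg_left hsG hr0
      have hfin : e + r * (r ^ j + e / (1 - r)) = r ^ (j + 1) + e / (1 - r) := by
        have h1r : (1 - r) ≠ 0 := by linarith
        field_simp
        ring
      linarith
  -- conclusion
  obtain ⟨G, _, hG⟩ := hrec k
  refine ⟨G, fun N hN => ?_⟩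
  rw [tail_eq π hπ_nonneg hπ_sum hN G]
  have h2 := hG N hN
  have h3 : e / (1 - r) = ε / 4 := by
    have h1r : (1 - r) ≠ 0 := by linarith
    rw [hedef]
    field_simp
  rw [h3] at h2
  linarith
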